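/- Let ρ, a_max, b_min, b_max > 0 with b_min ≤ b_max, and suppose v_r ≥ 0, v_f ≥ 0, v_r ≤ v_f. Then along the dynamics where the rear car brakes at rate b ∈ [0, b_min] (v_r' = −b while v_r > 0) and the front car moves at constant speed v_f, the RSS margin y_f − y_r − dRSS(v_f, v_r) is nondecreasing, where dRSS(v_f, v_r) = max(0, v_r·ρ + a_max·ρ²/2 + (v_r + a_max·ρ)²/(2·b_min) − v_f²/(2·b_max)). -/

import Mathlib

/-- The RSS minimum safety distance. -/
noncomputable def dRSS (ρ amax bmin bmax vf vr : ℝ) : ℝ :=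
  max 0 (vr * ρ + amax * ρ ^ 2 / 2 + (vr + amax * ρ) ^ 2 / (2 * bmin)
    - vf ^ 2 / (2 * bmax))

lemma dRSS_mono (ρ amax bmin bmax vf v1 v2 : ℝ) (hρ : 0 < ρ) (ha : 0 < amax)
    (hb1 : 0 < bmin) (h1 : 0 ≤ v1) (h12 : v1 ≤ v2) :
    dRSS ρ amax bmin bmax vf v1 ≤ dRSS ρ amax bmin bmax vf v2 := by
  unfold dRSS
  apply max_le_max le_rfl
  have hsq : (v1 + amax * ρ) ^ 2 ≤ (v2 + amax * ρ) ^ 2 := pow_le_pow_left₀ (by positivity) (by linarith) 2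
  have h2b : (0:ℝ) ≤ 2 * bmin := by linarith
  have hd : (v1 + amax * ρ) ^ 2 / (2 * bmin) ≤ (v2 + amax * ρ) ^ 2 / (2 * bmin) :=
    div_le_div_of_nonneg_right hsq h2b
  have hρ' : v1 * ρ ≤ v2 * ρ := mul_le_mul_of_nonneg_right h12 hρ.le
  linarith

/-- Safety preservation in subscenario T₁₁: if the rear car (speed `v_r ∈ [0, v_f]`)
brakes at a rate `b ∈ [0, bmin]` while the front car moves at constant speed `v_f`,
then the RSS margin `y_f − y_r − dRSS(v_f, v_r)` is nondecreasing. -/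
theorem stmt12 (ρ amax bmin bmax vf b : ℝ)
    (hρ : 0 < ρ) (ha : 0 < amax) (hb1 : 0 < bmin) (hb2 : 0 < bmax)
    (hle : bmin ≤ bmax) (hvf : 0 ≤ vf) (hb0 : 0 ≤ b) (hbb : b ≤ bmin)
    (yf yr vr : ℝ → ℝ) (a c : ℝ) (hac : a ≤ c)
    (hyf : ∀ t ∈ Set.Icc a c, HasDerivAt yf vf t)
    (hyr : ∀ t ∈ Set.Icc a c, HasDerivAt yr (vr t) t)
    (hvr : ∀ t ∈ Set.Icc a c, HasDerivAt vr (-b) t)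
    (hpos : ∀ t ∈ Set.Icc a c, 0 ≤ vr t)
    (hvle : ∀ t ∈ Set.Icc a c, vr t ≤ vf) :
    MonotoneOn (fun t => yf t - yr t - dRSS ρ amax bmin bmax vf (vr t))
      (Set.Icc a c) := by
  have hconv : Convex ℝ (Set.Icc a c) := convex_Icc a c
  -- f = yf - yr is monotone
  have hf : MonotoneOn (fun t => yf t - yr t) (Set.Icc a c) := by
    apply monotoneOn_of_deriv_nonneg hconv
    · exact fun t ht => ((hyf t ht).sub (hyr t ht)).continuousAt.continuousWithinAt
    · intro t ht
      have ht' := interior_subset ht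
      exact ((hyf t ht').sub (hyr t ht')).differentiableAt.differentiableWithinAt
    · intro t ht
      have ht' := interior_subset ht
      rw [((hyf t ht').fun_sub (hyr t ht')).deriv]
      have := hvle t ht'
      linarith
  -- vr is antitone
  have hvra : AntitoneOn vr (Set.Icc a c) := by
    apply antitoneOn_of_deriv_nonpos hconv
    · exact fun t ht => (hvr t ht).continuousAt.continuousWithinAt
    · intro t ht
      exact (hvr t (interior_subset ht)).differentiableAt.differentiableWithinAt
    · intro t ht
      rw [(hvr t (interior_subset ht)).deriv]
      linarith
  intro x hx y hy hxy
  have h1 : yf x - yr x ≤ yf y - yr y := hf hx hy hxy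
  have h2 := dRSS_mono ρ amax bmin bmax vf (vr y) (vr x) hρ ha hb1 (hpos y hy)
    (hvra hx hy hxy)
  simp only
  linarith
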